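/- Let M be a model category and let G : 2ⁿ ⥤ M be a functor such that for every x ∈ 2ⁿ with x ≠ ⊥ the latching map L_x G → G(x) is a trivial cofibration in M. Then the morphism G(⊥) → G(⊤) induced by ⊥ ≤ ⊤ is a trivial cofibration in M. -/

import Mathlib

open CategoryTheory CategoryTheory.Limits

universe v u

/-- `f` is a retract of `g` in the arrow category. -/
def IsRetract {C : Type u} [Category.{v} C] {X Y X' Y' : C} (f : X ⟶ Y) (g : X' ⟶ Y') : Prop :=
  ∃ (i : X ⟶ X') (r : X' ⟶ X) (i' : Y ⟶ Y') (r' : Y' ⟶ Y),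
    i ≫ r = 𝟙 X ∧ i' ≫ r' = 𝟙 Y ∧ i ≫ g = f ≫ i' ∧ g ≫ r' = r ≫ f

/-- A model structure on a category: three classes of morphisms (weak equivalences,
cofibrations, fibrations) satisfying Quillen's axioms (two-out-of-three, closure
under retracts, lifting, and factorization). -/
structure ModelStructure (C : Type u) [Category.{v} C] where
  W : MorphismProperty C
  Cof : MorphismProperty C
  Fib : MorphismProperty C
  w_comp : ∀ {X Y Z : C} (f : X ⟶ Y) (g : Y ⟶ Z), W f → W g → W (f ≫ g)
  w_cancel_left : ∀ {X Y Z : C} (f : X ⟶ Y) (g : Y ⟶ Z), W f → W (f ≫ g) → W g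
  w_cancel_right : ∀ {X Y Z : C} (f : X ⟶ Y) (g : Y ⟶ Z), W g → W (f ≫ g) → W f
  w_retract : ∀ {X Y X' Y' : C} (f : X ⟶ Y) (g : X' ⟶ Y'), IsRetract f g → W g → W f
  cof_retract : ∀ {X Y X' Y' : C} (f : X ⟶ Y) (g : X' ⟶ Y'), IsRetract f g → Cof g → Cof f
  fib_retract : ∀ {X Y X' Y' : C} (f : X ⟶ Y) (g : X' ⟶ Y'), IsRetract f g → Fib g → Fib f
  lift_cof_trivFib : ∀ {A B X Y : C} (i : A ⟶ B) (p : X ⟶ Y),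
    Cof i → Fib p → W p → HasLiftingProperty i p
  lift_trivCof_fib : ∀ {A B X Y : C} (i : A ⟶ B) (p : X ⟶ Y),
    Cof i → W i → Fib p → HasLiftingProperty i p
  factor_cof_trivFib : ∀ {X Y : C} (f : X ⟶ Y), ∃ (Z : C) (g : X ⟶ Z) (h : Z ⟶ Y),
    Cof g ∧ Fib h ∧ W h ∧ g ≫ h = f
  factor_trivCof_fib : ∀ {X Y : C} (f : X ⟶ Y), ∃ (Z : C) (g : X ⟶ Z) (h : Z ⟶ Y),
    Cof g ∧ W g ∧ Fib h ∧ g ≫ h = f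

variable {M : Type u} [Category.{v} M]

/-- An object is cofibrant if the map from the initial object is a cofibration. -/
def ModelStructure.Cofibrant [HasInitial M] (m : ModelStructure M) (X : M) : Prop :=
  m.Cof (initial.to X)

section Latching

variable {P : Type} [Preorder P] [HasColimitsOfSize.{0, 0} M]

/-- The latching object of `F : P ⥤ M` at `x`: the colimit of `F` over the full
subcategory of all `y < x`. -/
noncomputable def latchingObj (F : P ⥤ M) (x : P) : M :=
  colimit (ObjectProperty.ι (fun y : P => y < x) ⋙ F)

/-- The canonical (latching) map `L_x F ⟶ F x`. -/
noncomputable def latchingMap (F : P ⥤ M) (x : P) : latchingObj F x ⟶ F.obj x :=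
  colimit.desc (ObjectProperty.ι (fun y : P => y < x) ⋙ F)
    { pt := F.obj x
      ι :=
        { app := fun y => F.map (homOfLE y.property.le)
          naturality := by
            intro a b f
            dsimp
            rw [Category.comp_id, ← F.map_comp]
            rfl } }

/-- The map induced by a natural transformation on latching objects. -/
noncomputable def latchingObjHom {F G : P ⥤ M} (τ : F ⟶ G) (x : P) :
    latchingObj F x ⟶ latchingObj G x :=
  colimMap (Functor.whiskerLeft (ObjectProperty.ι (fun y : P => y < x)) τ)

lemma latching_square {F G : P ⥤ M} (τ : F ⟶ G) (x : P) :
    latchingMap F x ≫ τ.app x = latchingObjHom τ x ≫ latchingMap G x := by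
  apply colimit.hom_ext
  intro y
  simp [latchingMap, latchingObjHom, latchingObj]

/-- The relative latching map of `τ : F ⟶ G` at `x`:
the induced map `(L_x G) ⊔_{L_x F} F x ⟶ G x`. -/
noncomputable def relLatchingMap {F G : P ⥤ M} (τ : F ⟶ G) (x : P) :
    pushout (latchingMap F x) (latchingObjHom τ x) ⟶ G.obj x :=
  pushout.desc (τ.app x) (latchingMap G x) (latching_square τ x)

end Latching

attribute [local instance 2000] Preorder.smallCategory

namespace S5Aux

variable {n : ℕ}

def wt (x : Fin n → Bool) : ℕ := (Finset.univ.filter (fun i => x i = true)).card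

lemma wt_mono {y x : Fin n → Bool} (h : y ≤ x) : wt y ≤ wt x := by
  apply Finset.card_le_card
  intro i hi
  simp only [Finset.mem_filter, Finset.mem_univ, true_and] at hi ⊢
  have := h i
  rw [hi] at this
  exact top_le_iff.mp this

lemma wt_strictMono {y x : Fin n → Bool} (h : y < x) : wt y < wt x := by
  apply Finset.card_lt_card
  constructor
  · intro i hi
    simp only [Finset.mem_filter, Finset.mem_univ, true_and] at hi ⊢
    have := h.le i
    rw [hi] at this
    exact top_le_iff.mp this
  · intro hsub
    apply h.ne
    funext i
    by_cases hy : y i = true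
    · have hx : x i = true := by
        have := h.le i; rw [hy] at this; exact top_le_iff.mp this
      rw [hy, hx]
    · by_cases hx : x i = true
      · have : y i = true := by
          have := hsub (by simp [hx] : i ∈ Finset.univ.filter (fun j => x j = true))
          simpa using this
        exact absurd this hy
      · simp only [Bool.not_eq_true] at hy hx; rw [hy, hx]

lemma eq_bot_of_wt_eq_zero {x : Fin n → Bool} (h : wt x = 0) : x = ⊥ := by
  have he := Finset.card_eq_zero.mp h
  funext i
  have hi : i ∉ Finset.univ.filter (fun j => x j = true) := by rw [he]; simp
  simp only [Finset.mem_filter, Finset.mem_univ, true_and, Bool.not_eq_true] at hi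
  simp [hi]

lemma wt_bot : wt (⊥ : Fin n → Bool) = 0 := by
  simp [wt]

lemma wt_le (x : Fin n → Bool) : wt x ≤ n := by
  simpa [wt] using (Finset.card_filter_le Finset.univ (fun i => x i = true))

end S5Aux

set_option synthInstance.maxHeartbeats 1000000 in
set_option maxHeartbeats 2000000 in
open S5Aux in
lemma exists_lift_aux [HasColimits M] (m : ModelStructure M)
    {n : ℕ} (G : (Fin n → Bool) ⥤ M)
    (h : ∀ x : Fin n → Bool, x ≠ ⊥ →
      m.Cof (latchingMap G x) ∧ m.W (latchingMap G x))
    {X Y : M} (p : X ⟶ Y) (hp : m.Fib p) (u : G.obj ⊥ ⟶ X) (v : G.obj ⊤ ⟶ Y)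
    (hsq : u ≫ p = G.map (homOfLE bot_le) ≫ v) :
    ∃ l : G.obj ⊤ ⟶ X, G.map (homOfLE bot_le) ≫ l = u ∧ l ≫ p = v := by
  haveI hcs : HasColimitsOfSize.{0, 0} M := inferInstance
  have main : ∀ k : ℕ, ∃ f : (x : Fin n → Bool) → wt x ≤ k → (G.obj x ⟶ X),
      (∀ hb, f ⊥ hb = u) ∧
      (∀ x hx, f x hx ≫ p = G.map (homOfLE le_top) ≫ v) ∧
      (∀ y z (hyz : y ≤ z) (hz : wt z ≤ k),
        G.map (homOfLE hyz) ≫ f z hz = f y (le_trans (wt_mono hyz) hz)) := by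
    intro k
    induction k with
    | zero =>
      refine ⟨fun x hx =>
        G.map (homOfLE (le_of_eq (eq_bot_of_wt_eq_zero (Nat.le_zero.mp hx)))) ≫ u,
        ?_, ?_, ?_⟩
      · intro hb
        dsimp only
        have : homOfLE (le_of_eq (eq_bot_of_wt_eq_zero (Nat.le_zero.mp hb))) =
            𝟙 (⊥ : Fin n → Bool) := rfl
        rw [this, G.map_id, Category.id_comp]
      · intro x hx
        dsimp only
        rw [Category.assoc, hsq, ← Functor.map_comp_assoc]
        rfl
      · intro y z hyz hz
        dsimp only
        rw [← Functor.map_comp_assoc]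
        rfl
    | succ k ih =>
      obtain ⟨f, hfb, hfp, hfnat⟩ := ih
      have key : ∀ x : Fin n → Bool, wt x ≤ k + 1 → ¬ wt x ≤ k →
          ∃ l : G.obj x ⟶ X,
            (∀ y (hy : y < x) (hyk : wt y ≤ k),
              G.map (homOfLE hy.le) ≫ l = f y hyk) ∧
            l ≫ p = G.map (homOfLE le_top) ≫ v := by
        intro x hx1 hxk
        have hne : x ≠ ⊥ := by
          intro hb
          exact hxk (by rw [hb, wt_bot]; omega)
        have hylt : ∀ y, y < x → wt y ≤ k := fun y hy => by
          have h1 := wt_strictMono hy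
          omega
        let c : Cocone (ObjectProperty.ι (fun y : Fin n → Bool => y < x) ⋙ G) :=
          { pt := X
            ι :=
              { app := fun y => f y.1 (hylt y.1 y.2)
                naturality := by
                  intro a b g
                  dsimp
                  rw [Category.comp_id]
                  rw [Subsingleton.elim g.hom (homOfLE (leOfHom g.hom))]
                  exact hfnat a.1 b.1 (leOfHom g.hom) (hylt b.1 b.2) } }
        have hiota : ∀ (y : ObjectProperty.FullSubcategory fun y : Fin n → Bool => y < x),
            colimit.ι (ObjectProperty.ι (fun y : Fin n → Bool => y < x) ⋙ G) y ≫
              latchingMap G x = G.map (homOfLE y.2.le) := fun y => by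
          simp [latchingMap]
        have sq : CommSq (colimit.desc _ c) (latchingMap G x) p
            (G.map (homOfLE le_top) ≫ v) := by
          constructor
          apply colimit.hom_ext
          intro y
          rw [← Category.assoc, colimit.ι_desc]
          erw [← Category.assoc, hiota y]
          rw [← Functor.map_comp_assoc]
          dsimp [c]
          rw [hfp y.1 (hylt y.1 y.2)]
        haveI := m.lift_trivCof_fib (latchingMap G x) p (h x hne).1 (h x hne).2 hp
        haveI : sq.HasLift := this.sq_hasLift sq
        refine ⟨sq.lift, fun y hy hyk => ?_, sq.fac_right⟩
        have h1 : G.map (homOfLE hy.le) ≫ sq.lift =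
            colimit.ι (ObjectProperty.ι (fun y : Fin n → Bool => y < x) ⋙ G)
              ⟨y, hy⟩ ≫ latchingMap G x ≫ sq.lift := by
          erw [← Category.assoc, hiota ⟨y, hy⟩]
        rw [h1, sq.fac_left, colimit.ι_desc]
      refine ⟨fun x hx => if hk : wt x ≤ k then f x hk else (key x hx hk).choose,
        ?_, ?_, ?_⟩
      · intro hb
        dsimp only
        rw [dif_pos (by rw [wt_bot]; omega : wt (⊥ : Fin n → Bool) ≤ k)]
        exact hfb _
      · intro x hx
        dsimp only
        by_cases hk : wt x ≤ k
        · rw [dif_pos hk]; exact hfp x hk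
        · rw [dif_neg hk]; exact (key x hx hk).choose_spec.2
      · intro y z hyz hz
        dsimp only
        by_cases hkz : wt z ≤ k
        · have hky : wt y ≤ k := le_trans (wt_mono hyz) hkz
          rw [dif_pos hkz, dif_pos hky]
          exact hfnat y z hyz hkz
        · rw [dif_neg hkz]
          rcases eq_or_lt_of_le hyz with rfl | hlt
          · have he : homOfLE hyz = 𝟙 y := rfl
            rw [he, G.map_id, Category.id_comp, dif_neg hkz]
          · have hky : wt y ≤ k := by
              have := wt_strictMono hlt
              omega
            rw [dif_pos hky]
            exact (key z hz hkz).choose_spec.1 y hlt hky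
  obtain ⟨f, h1, h2, h3⟩ := main n
  refine ⟨f ⊤ (wt_le ⊤), ?_, ?_⟩
  · rw [h3 ⊥ ⊤ bot_le (wt_le ⊤)]
    exact h1 _
  · have h4 := h2 ⊤ (wt_le ⊤)
    rw [h4]
    have he : homOfLE (le_top : (⊤ : Fin n → Bool) ≤ ⊤) = 𝟙 ⊤ := rfl
    rw [he, G.map_id, Category.id_comp]



/-- If `G : 2ⁿ ⥤ M` has all of its latching maps `L_x G ⟶ G x`
at `x ≠ ⊥` trivial cofibrations, then the induced map `G ⊥ ⟶ G ⊤` is a trivial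
cofibration. -/
theorem statement5 [HasLimits M] [HasColimits M] (m : ModelStructure M)
    (n : ℕ) (G : (Fin n → Bool) ⥤ M)
    (h : ∀ x : Fin n → Bool, x ≠ ⊥ →
      m.Cof (latchingMap G x) ∧ m.W (latchingMap G x)) :
    m.Cof (G.map (homOfLE (bot_le : (⊥ : Fin n → Bool) ≤ ⊤))) ∧
    m.W (G.map (homOfLE (bot_le : (⊥ : Fin n → Bool) ≤ ⊤))) := by
  obtain ⟨Z, g, q, hgCof, hgW, hqFib, hfac⟩ :=
    m.factor_trivCof_fib (G.map (homOfLE (bot_le : (⊥ : Fin n → Bool) ≤ ⊤)))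
  obtain ⟨t, ht1, ht2⟩ := exists_lift_aux m G h q hqFib g (𝟙 _)
    (by rw [hfac, Category.comp_id])
  have ret : IsRetract (G.map (homOfLE (bot_le : (⊥ : Fin n → Bool) ≤ ⊤))) g :=
    ⟨𝟙 _, 𝟙 _, t, q, by simp, ht2, by rw [Category.id_comp, ht1], by
      rw [hfac, Category.id_comp]⟩
  exact ⟨m.cof_retract _ _ ret hgCof, m.w_retract _ _ ret hgW⟩
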